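/- arXiv:1403.5789 — 4 statements merged into one kernel-verified Lean document; each statement's English description precedes it below -/
import Mathlib

section
/- For a positive integer m, a nonnegative integer n and a finite multiset M of positive integers, define F(m, n, M) := Σ_{k∈ℤ, |k|<m} (−1 + n·(m−|k|)/m + Σ_{μ∈M} {−|k|·μ/m}) · t^{k/m}, a finitely supported function ℚ → ℚ. Then for every positive integer m, nonnegative integers n₁, n₂, every integer d with 0 ≤ d ≤ m, and finite multisets M₁, M₂ of positive integers, one has F(m, n₁+n₂, M₁⊎M₂) − F(m, n₂+d, M₂) = F(m, n₁+(m−d), M₁) − F(m, m, ∅). (Moreover F(m, m, ∅) = Σ_{|k|<m}(m−|k|−1)t^{k/m}, the spectrum of the ordinary m-fold point.) -/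
/-- The contribution `F(m, n, M)` of a single exceptional divisor of multiplicity `m`,
meeting `n` branches of the strict transform transversally and neighbouring exceptional
divisors of multiplicities listed in the multiset `M` (Lemma 3.1):
`F(m, n, M) = Σ_{|k|<m} (−1 + n(m−|k|)/m + Σ_{μ∈M} {−|k|μ/m}) t^{k/m}`,
a finitely supported function `ℚ → ℚ`, with `t^ξ` the indicator of `ξ` and `{x}` the
fractional part. -/
noncomputable def F (m n : ℕ) (M : Multiset ℕ) : ℚ →₀ ℚ :=
  ∑ k ∈ Finset.Ioo (-(m : ℤ)) (m : ℤ),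
    Finsupp.single ((k : ℚ) / (m : ℚ))
      (-1 + (n : ℚ) * ((m : ℚ) - (k.natAbs : ℚ)) / (m : ℚ)
        + (M.map fun μ => Int.fract (-((k.natAbs : ℚ) * (μ : ℚ)) / (m : ℚ))).sum)

/-- the combinatorial core of part 1 of Theorem 4.1, the cut-and-paste
formula: for `m > 0`, `n₁, n₂ ≥ 0`, `0 ≤ d ≤ m` and finite multisets `M₁, M₂` of positive
integers, `F(m, n₁+n₂, M₁⊎M₂) − F(m, n₂+d, M₂) = F(m, n₁+(m−d), M₁) − F(m, m, ∅)`;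
moreover `F(m, m, ∅) = Σ_{|k|<m} (m−|k|−1) t^{k/m}`, the spectrum of the ordinary
`m`-fold point. -/
theorem stmt_1 (m : ℕ) (hm : 0 < m) (n₁ n₂ : ℕ) (d : ℕ) (hd : d ≤ m)
    (M₁ M₂ : Multiset ℕ) (hM₁ : ∀ μ ∈ M₁, 0 < μ) (hM₂ : ∀ μ ∈ M₂, 0 < μ) :
    F m (n₁ + n₂) (M₁ + M₂) - F m (n₂ + d) M₂ = F m (n₁ + (m - d)) M₁ - F m m 0 ∧
    F m m 0 = ∑ k ∈ Finset.Ioo (-(m : ℤ)) (m : ℤ),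
      Finsupp.single ((k : ℚ) / (m : ℚ)) ((m : ℚ) - (k.natAbs : ℚ) - 1) := by
  have hm' : (m : ℚ) ≠ 0 := Nat.cast_ne_zero.mpr hm.ne'
  have hdm : ((m - d : ℕ) : ℚ) = (m : ℚ) - (d : ℚ) := by
    exact Nat.cast_sub hd
  constructor
  · unfold F
    rw [← Finset.sum_sub_distrib, ← Finset.sum_sub_distrib]
    refine Finset.sum_congr rfl fun k hk => ?_
    rw [← Finsupp.single_sub, ← Finsupp.single_sub]
    congr 1
    simp only [bind_pure_comp, Multiset.fmap_def, Multiset.map_add, Multiset.sum_add, Multiset.map_zero, Multiset.sum_zero,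
      Nat.cast_add, hdm]
    field_simp
    ring
  · unfold F
    refine Finset.sum_congr rfl fun k hk => ?_
    congr 1
    simp
    field_simp
    ring
end

section
/- Let m < M be positive integers. In the group of finitely supported functions ℚ → ℚ, the following identity holds: Σ_{|s|<M} {−s·m/M}·t^{s/M} − Σ_{|s|<m} {s·M/m}·t^{s/m} = Σ_{|s|<M−m} {−s·m/(M−m)}·t^{s/(M−m)} − Σ_{|s|<m} {s·(M−m)/m}·t^{s/m} − Σ_{|s|<M−m} t^{s/(M−m)} + Σ_{|s|<M} {s·(M−m)/M}·t^{s/M} + Σ_{|s|<M−m} (1 − {−s·M/(M−m)})·t^{s/(M−m)}. -/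
/-- the cancellation identity, equation (19) of the paper: for positive
integers `m < M`, in the group of finitely supported functions `ℚ → ℚ` (with `t^ξ` the
indicator of `ξ` and `{x} = Int.fract x` the fractional part),
`Σ_{|s|<M} {−sm/M} t^{s/M} − Σ_{|s|<m} {sM/m} t^{s/m}
  = Σ_{|s|<M−m} {−sm/(M−m)} t^{s/(M−m)} − Σ_{|s|<m} {s(M−m)/m} t^{s/m}
    − Σ_{|s|<M−m} t^{s/(M−m)} + Σ_{|s|<M} {s(M−m)/M} t^{s/M}
    + Σ_{|s|<M−m} (1 − {−sM/(M−m)}) t^{s/(M−m)}`. -/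
theorem stmt_2 (m M : ℕ) (hm : 0 < m) (hmM : m < M) :
    (∑ s ∈ Finset.Ioo (-(M : ℤ)) (M : ℤ),
        Finsupp.single ((s : ℚ) / (M : ℚ)) (Int.fract (-((s : ℚ) * (m : ℚ)) / (M : ℚ))))
      - ∑ s ∈ Finset.Ioo (-(m : ℤ)) (m : ℤ),
          Finsupp.single ((s : ℚ) / (m : ℚ)) (Int.fract ((s : ℚ) * (M : ℚ) / (m : ℚ)))
    =
    (∑ s ∈ Finset.Ioo (-((M - m : ℕ) : ℤ)) ((M - m : ℕ) : ℤ),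
        Finsupp.single ((s : ℚ) / ((M - m : ℕ) : ℚ))
          (Int.fract (-((s : ℚ) * (m : ℚ)) / ((M - m : ℕ) : ℚ))))
      - (∑ s ∈ Finset.Ioo (-(m : ℤ)) (m : ℤ),
          Finsupp.single ((s : ℚ) / (m : ℚ))
            (Int.fract ((s : ℚ) * ((M - m : ℕ) : ℚ) / (m : ℚ))))
      - (∑ s ∈ Finset.Ioo (-((M - m : ℕ) : ℤ)) ((M - m : ℕ) : ℤ),
          Finsupp.single ((s : ℚ) / ((M - m : ℕ) : ℚ)) (1 : ℚ))
      + (∑ s ∈ Finset.Ioo (-(M : ℤ)) (M : ℤ),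
          Finsupp.single ((s : ℚ) / (M : ℚ))
            (Int.fract ((s : ℚ) * ((M - m : ℕ) : ℚ) / (M : ℚ))))
      + (∑ s ∈ Finset.Ioo (-((M - m : ℕ) : ℤ)) ((M - m : ℕ) : ℤ),
          Finsupp.single ((s : ℚ) / ((M - m : ℕ) : ℚ))
            (1 - Int.fract (-((s : ℚ) * (M : ℚ)) / ((M - m : ℕ) : ℚ)))) := by
  have hm0 : (m : ℚ) ≠ 0 := Nat.cast_ne_zero.2 hm.ne'
  have hM0 : (M : ℚ) ≠ 0 := Nat.cast_ne_zero.2 (by omega)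
  have hK0 : ((M - m : ℕ) : ℚ) ≠ 0 := Nat.cast_ne_zero.2 (by omega)
  have hcast : ((M - m : ℕ) : ℚ) = (M : ℚ) - (m : ℚ) := by
    push_cast [hmM.le]; ring
  have hK0' : (M : ℚ) - (m : ℚ) ≠ 0 := hcast ▸ hK0
  have e1 : ∀ s ∈ Finset.Ioo (-(m : ℤ)) (m : ℤ),
      Finsupp.single ((s : ℚ) / (m : ℚ))
        (Int.fract ((s : ℚ) * ((M - m : ℕ) : ℚ) / (m : ℚ)))
      = Finsupp.single ((s : ℚ) / (m : ℚ)) (Int.fract ((s : ℚ) * (M : ℚ) / (m : ℚ))) := by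
    intro s _
    congr 1
    refine Int.fract_eq_fract.2 ⟨-s, ?_⟩
    rw [hcast]
    push_cast
    field_simp
    ring
  have e2 : ∀ s ∈ Finset.Ioo (-(M : ℤ)) (M : ℤ),
      Finsupp.single ((s : ℚ) / (M : ℚ))
        (Int.fract ((s : ℚ) * ((M - m : ℕ) : ℚ) / (M : ℚ)))
      = Finsupp.single ((s : ℚ) / (M : ℚ)) (Int.fract (-((s : ℚ) * (m : ℚ)) / (M : ℚ))) := by
    intro s _
    congr 1
    refine Int.fract_eq_fract.2 ⟨s, ?_⟩
    rw [hcast]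
    push_cast
    field_simp
    ring
  have e3 : ∀ s ∈ Finset.Ioo (-((M - m : ℕ) : ℤ)) ((M - m : ℕ) : ℤ),
      Finsupp.single ((s : ℚ) / ((M - m : ℕ) : ℚ))
        (1 - Int.fract (-((s : ℚ) * (M : ℚ)) / ((M - m : ℕ) : ℚ)))
      = Finsupp.single ((s : ℚ) / ((M - m : ℕ) : ℚ))
          (1 - Int.fract (-((s : ℚ) * (m : ℚ)) / ((M - m : ℕ) : ℚ))) := by
    intro s _
    congr 2
    refine Int.fract_eq_fract.2 ⟨-s, ?_⟩
    rw [hcast]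
    push_cast
    field_simp [hK0']
    ring
  rw [Finset.sum_congr rfl e1, Finset.sum_congr rfl e2, Finset.sum_congr rfl e3]
  have hcancel :
      (∑ s ∈ Finset.Ioo (-((M - m : ℕ) : ℤ)) ((M - m : ℕ) : ℤ),
        Finsupp.single ((s : ℚ) / ((M - m : ℕ) : ℚ))
          (Int.fract (-((s : ℚ) * (m : ℚ)) / ((M - m : ℕ) : ℚ))))
      + (∑ s ∈ Finset.Ioo (-((M - m : ℕ) : ℤ)) ((M - m : ℕ) : ℤ),
        Finsupp.single ((s : ℚ) / ((M - m : ℕ) : ℚ))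
          (1 - Int.fract (-((s : ℚ) * (m : ℚ)) / ((M - m : ℕ) : ℚ))))
      = ∑ s ∈ Finset.Ioo (-((M - m : ℕ) : ℤ)) ((M - m : ℕ) : ℤ),
          Finsupp.single ((s : ℚ) / ((M - m : ℕ) : ℚ)) (1 : ℚ) := by
    rw [← Finset.sum_add_distrib]
    refine Finset.sum_congr rfl fun s _ => ?_
    rw [← Finsupp.single_add]
    congr 1
    ring
  rw [← hcancel]
  abel
end

section
/- For integers p, q ≥ 0 with q ≠ 1 and p + q ≥ 2, let S_{p,q} := Σ_{|k|<p+2q} (q − ⌈q·|k|/(p+2q)⌉)·t^{k/(p+2q)} + Σ_{|k|<p+q} (p − 1 − ⌊p·|k|/(p+q)⌋)·t^{k/(p+q)}, a finitely supported function ℚ → ℤ. Then the maximal element of the support of S_{p,q} equals 1 − 2/(p+q) if p > q, and equals 1 − 3/(p+2q) if p ≤ q. -/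
/-- The spectrum of the basic-type plane curve singularity
`C_{p,q} = {(x^p+y^p)(y^q−x^{2q})=0}` (formula (13) of the paper), as a finitely supported
function `ℚ → ℤ`; `t^ξ` is the indicator function `Finsupp.single ξ 1`. -/
noncomputable def S (p q : ℕ) : ℚ →₀ ℤ :=
  (∑ k ∈ Finset.Ioo (-(p + 2 * q : ℤ)) (p + 2 * q : ℤ),
      Finsupp.single ((k : ℚ) / (p + 2 * q : ℚ))
        ((q : ℤ) - ⌈((q * k.natAbs : ℕ) : ℚ) / (p + 2 * q : ℚ)⌉))
  + ∑ k ∈ Finset.Ioo (-(p + q : ℤ)) (p + q : ℤ),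
      Finsupp.single ((k : ℚ) / (p + q : ℚ))
        ((p : ℤ) - 1 - ⌊((p * k.natAbs : ℕ) : ℚ) / (p + q : ℚ)⌋)

lemma S_apply (p q : ℕ) (ξ : ℚ) :
    S p q ξ =
      (∑ k ∈ Finset.Ioo (-(p + 2 * q : ℤ)) (p + 2 * q : ℤ),
        if (k : ℚ) / (p + 2 * q : ℚ) = ξ then
          ((q : ℤ) - ⌈((q * k.natAbs : ℕ) : ℚ) / (p + 2 * q : ℚ)⌉) else 0)
      + ∑ k ∈ Finset.Ioo (-(p + q : ℤ)) (p + q : ℤ),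
        if (k : ℚ) / (p + q : ℚ) = ξ then
          ((p : ℤ) - 1 - ⌊((p * k.natAbs : ℕ) : ℚ) / (p + q : ℚ)⌋) else 0 := by
  rw [S, Finsupp.add_apply, Finsupp.finset_sum_apply, Finsupp.finset_sum_apply]
  congr 1 <;> exact Finset.sum_congr rfl fun k _ => Finsupp.single_apply

lemma myceil {a d : ℚ} {z : ℤ} (hd : 0 < d) (h1 : ((z : ℚ) - 1) * d < a)
    (h2 : a ≤ (z : ℚ) * d) : ⌈a / d⌉ = z := by
  rw [Int.ceil_eq_iff]
  exact ⟨by rw [lt_div_iff₀ hd]; linarith, by rw [div_le_iff₀ hd]; linarith⟩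

lemma myfloor {a d : ℚ} {z : ℤ} (hd : 0 < d) (h1 : (z : ℚ) * d ≤ a)
    (h2 : a < ((z : ℚ) + 1) * d) : ⌊a / d⌋ = z := by
  rw [Int.floor_eq_iff]
  exact ⟨by rw [le_div_iff₀ hd]; linarith, by rw [div_lt_iff₀ hd]; push_cast; linarith⟩

lemma natAbsCast (c : ℕ) {k : ℤ} (h : 0 ≤ k) :
    ((c * k.natAbs : ℕ) : ℚ) = (c : ℚ) * (k : ℚ) := by
  push_cast [Nat.cast_natAbs, abs_of_nonneg (show (0:ℚ) ≤ (k:ℚ) by exact_mod_cast h)]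
  norm_cast

lemma intDivInj {k c : ℤ} {D : ℚ} (hD : D ≠ 0) (h : (k : ℚ) / D = (c : ℚ) / D) : k = c := by
  field_simp at h; exact_mod_cast h

private lemma mem1 (p q : ℕ) (hq : q ≠ 1) (hpq : 2 ≤ p + q) (h : q < p) :
    (1 - 2 / ((p : ℚ) + q)) ∈ ((S p q).support : Set ℚ) := by
  have hM : (0:ℚ) < (p:ℚ) + q := by
    have : (0:ℤ) < (p:ℤ) + q := by omega
    exact_mod_cast this
  have hN : (0:ℚ) < (p:ℚ) + 2*q := by
    have : (0:ℤ) < (p:ℤ) + 2*q := by omega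
    exact_mod_cast this
  have hM2 : (2:ℚ) ≤ (p:ℚ) + q := by exact_mod_cast hpq
  have hqp : (q:ℚ) < (p:ℚ) := by exact_mod_cast h
  have hq0 : (0:ℚ) ≤ (q:ℚ) := by positivity
  simp only [Finset.mem_coe, Finsupp.mem_support_iff, S_apply]
  have hA : (∑ k ∈ Finset.Ioo (-(p + 2 * q : ℤ)) (p + 2 * q : ℤ),
      if (k : ℚ) / (p + 2 * q : ℚ) = 1 - 2 / ((p : ℚ) + q) then
        ((q : ℤ) - ⌈((q * k.natAbs : ℕ) : ℚ) / (p + 2 * q : ℚ)⌉) else 0) = 0 := by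
    refine Finset.sum_eq_zero fun k hk => ?_
    split_ifs with hc
    · rw [div_eq_iff hN.ne'] at hc
      have hc' : (k:ℚ) * ((p:ℚ)+q) = ((p:ℚ)+q-2) * ((p:ℚ)+2*q) := by
        rw [hc]; field_simp
      have hk0 : (0:ℤ) ≤ k := by
        have : (0:ℚ) ≤ (k:ℚ) := by nlinarith
        exact_mod_cast this
      rw [natAbsCast q hk0, myceil hN ?_ ?_, sub_self]
      · push_cast
        nlinarith [mul_pos hN (sub_pos.mpr hqp)]
      · push_cast
        nlinarith
    · rfl
  have hB : (∑ k ∈ Finset.Ioo (-(p + q : ℤ)) (p + q : ℤ),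
      if (k : ℚ) / (p + q : ℚ) = 1 - 2 / ((p : ℚ) + q) then
        ((p : ℤ) - 1 - ⌊((p * k.natAbs : ℕ) : ℚ) / (p + q : ℚ)⌋) else 0) = 1 := by
    have hmem : (p:ℤ) + q - 2 ∈ Finset.Ioo (-(p + q : ℤ)) (p + q : ℤ) := by
      simp only [Finset.mem_Ioo]; omega
    have hcond : (((p:ℤ) + q - 2 : ℤ) : ℚ) / (p + q : ℚ) = 1 - 2 / ((p : ℚ) + q) := by
      push_cast; field_simp
    rw [Finset.sum_eq_single_of_mem _ hmem ?_]
    · rw [if_pos hcond, natAbsCast p (by omega), myfloor (z := (p:ℤ)-2) hM ?_ ?_]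
      · push_cast; ring
      · push_cast; nlinarith
      · push_cast; nlinarith
    · intro j hj hne
      rw [if_neg]
      intro hcj
      exact hne (intDivInj hM.ne' (hcj.trans hcond.symm))
  rw [hA, hB]
  norm_num

private lemma ub1 (p q : ℕ) (hq : q ≠ 1) (hpq : 2 ≤ p + q) (h : q < p) :
    ∀ ξ ∈ ((S p q).support : Set ℚ), ξ ≤ 1 - 2 / ((p : ℚ) + q) := by
  have hM : (0:ℚ) < (p:ℚ) + q := by
    have : (0:ℤ) < (p:ℤ) + q := by omega
    exact_mod_cast this
  have hN : (0:ℚ) < (p:ℚ) + 2*q := by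
    have : (0:ℤ) < (p:ℤ) + 2*q := by omega
    exact_mod_cast this
  have hM2 : (2:ℚ) ≤ (p:ℚ) + q := by exact_mod_cast hpq
  have hqp : (q:ℚ) < (p:ℚ) := by exact_mod_cast h
  have hq0 : (0:ℚ) ≤ (q:ℚ) := by positivity
  have hp1 : (1:ℚ) ≤ (p:ℚ) := by
    have : 1 ≤ p := by omega
    exact_mod_cast this
  intro ξ hξ
  simp only [Finset.mem_coe, Finsupp.mem_support_iff, S_apply] at hξ
  by_contra hgt
  push_neg at hgt
  apply hξ
  rw [Finset.sum_eq_zero ?_, Finset.sum_eq_zero ?_, add_zero]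
  · -- B terms
    intro j hj
    split_ifs with hc
    · simp only [Finset.mem_Ioo] at hj
      have hjq : ((p:ℚ) + q - 2) < (j:ℚ) := by
        have h2 : ((p:ℚ) + q - 2) / ((p:ℚ) + q) < (j:ℚ) / ((p:ℚ)+q) := by
          rw [hc]
          calc ((p:ℚ) + q - 2) / ((p:ℚ) + q) = 1 - 2/((p:ℚ)+q) := by field_simp
          _ < ξ := hgt
        rw [div_lt_div_iff₀ hM hM] at h2
        nlinarith
      have hjz : (p:ℤ) + q - 2 < j := by exact_mod_cast hjq
      have hj1 : j = (p:ℤ) + q - 1 := by omega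
      subst hj1
      rw [natAbsCast p (by omega), myfloor (z := (p:ℤ)-1) hM ?_ ?_]
      · push_cast; ring
      · push_cast; nlinarith
      · push_cast; nlinarith
    · rfl
  · -- A terms
    intro k hk
    split_ifs with hc
    · rcases Nat.eq_zero_or_pos q with hq0' | hqpos
      · subst hq0'; norm_num
      have hq2 : (2:ℚ) ≤ (q:ℚ) := by
        have : 2 ≤ q := by omega
        exact_mod_cast this
      simp only [Finset.mem_Ioo] at hk
      have hkN : ((p:ℚ) + q - 2) * ((p:ℚ) + 2*q) < (k:ℚ) * ((p:ℚ) + q) := by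
        have h2 : ((p:ℚ) + q - 2) / ((p:ℚ) + q) < (k:ℚ) / ((p:ℚ)+2*q) := by
          rw [hc]
          calc ((p:ℚ) + q - 2) / ((p:ℚ) + q) = 1 - 2/((p:ℚ)+q) := by field_simp
          _ < ξ := hgt
        rw [div_lt_div_iff₀ hM hN] at h2
        linarith
      have hk0 : (0:ℤ) ≤ k := by
        have : (0:ℚ) ≤ (k:ℚ) := by nlinarith
        exact_mod_cast this
      have hkN1 : (k:ℚ) ≤ (p:ℚ) + 2*q - 1 := by
        have : k ≤ (p:ℤ) + 2*q - 1 := by omega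
        calc (k:ℚ) ≤ (((p:ℤ) + 2*q - 1 : ℤ) : ℚ) := by exact_mod_cast this
        _ = (p:ℚ) + 2*q - 1 := by push_cast; ring
      rw [natAbsCast q hk0, myceil (z := (q:ℤ)) hN ?_ ?_, sub_self]
      · push_cast
        nlinarith [mul_pos hN (sub_pos.mpr hqp)]
      · push_cast
        nlinarith
    · rfl

private lemma mem2 (p q : ℕ) (hq : q ≠ 1) (hpq : 2 ≤ p + q) (h : ¬ q < p) :
    (1 - 3 / ((p : ℚ) + 2*q)) ∈ ((S p q).support : Set ℚ) := by
  have hq2 : 2 ≤ q := by omega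
  have hM : (0:ℚ) < (p:ℚ) + q := by
    have : (0:ℤ) < (p:ℤ) + q := by omega
    exact_mod_cast this
  have hN : (0:ℚ) < (p:ℚ) + 2*q := by
    have : (0:ℤ) < (p:ℤ) + 2*q := by omega
    exact_mod_cast this
  have hpq' : (p:ℚ) ≤ (q:ℚ) := by exact_mod_cast (by omega : p ≤ q)
  have hq2' : (2:ℚ) ≤ (q:ℚ) := by exact_mod_cast hq2
  have hp0' : (0:ℚ) ≤ (p:ℚ) := by positivity
  simp only [Finset.mem_coe, Finsupp.mem_support_iff, S_apply]
  have hA : (∑ k ∈ Finset.Ioo (-(p + 2 * q : ℤ)) (p + 2 * q : ℤ),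
      if (k : ℚ) / (p + 2 * q : ℚ) = 1 - 3 / ((p : ℚ) + 2*q) then
        ((q : ℤ) - ⌈((q * k.natAbs : ℕ) : ℚ) / (p + 2 * q : ℚ)⌉) else 0) = 1 := by
    have hmem : (p:ℤ) + 2*q - 3 ∈ Finset.Ioo (-(p + 2 * q : ℤ)) (p + 2 * q : ℤ) := by
      simp only [Finset.mem_Ioo]; omega
    have hcond : (((p:ℤ) + 2*q - 3 : ℤ) : ℚ) / (p + 2 * q : ℚ) = 1 - 3 / ((p : ℚ) + 2*q) := by
      push_cast; field_simp
    rw [Finset.sum_eq_single_of_mem _ hmem ?_]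
    · rw [if_pos hcond, natAbsCast q (by omega), myceil (z := (q:ℤ)-1) hN ?_ ?_]
      · push_cast; ring
      · push_cast; nlinarith
      · push_cast; nlinarith
    · intro k hk hne
      rw [if_neg]
      intro hck
      exact hne (intDivInj hN.ne' (hck.trans hcond.symm))
  have hB : (∑ j ∈ Finset.Ioo (-(p + q : ℤ)) (p + q : ℤ),
      if (j : ℚ) / (p + q : ℚ) = 1 - 3 / ((p : ℚ) + 2*q) then
        ((p : ℤ) - 1 - ⌊((p * j.natAbs : ℕ) : ℚ) / (p + q : ℚ)⌋) else 0) = 0 := by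
    refine Finset.sum_eq_zero fun j hj => ?_
    split_ifs with hc
    · simp only [Finset.mem_Ioo] at hj
      have hc' : (j:ℚ) * ((p:ℚ) + 2*q) = ((p:ℚ) + 2*q - 3) * ((p:ℚ) + q) := by
        rw [div_eq_iff hM.ne'] at hc
        rw [hc]; field_simp
      have hcz : j * ((p:ℤ) + 2*q) = ((p:ℤ) + 2*q - 3) * ((p:ℤ) + q) := by
        exact_mod_cast hc'
      rcases Nat.eq_zero_or_pos p with hp0 | hppos
      · exfalso
        have h2 : (2*j) * (q:ℤ) = (2*(q:ℤ)-3) * q := by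
          rw [hp0] at hcz; push_cast at hcz; ring_nf at hcz ⊢; linarith
        have : 2*j = 2*(q:ℤ)-3 := by
          have hqz : (q:ℤ) ≠ 0 := by omega
          exact mul_right_cancel₀ hqz h2
        omega
      have hp1 : (1:ℚ) ≤ (p:ℚ) := by exact_mod_cast hppos
      have hj0 : (0:ℤ) ≤ j := by
        have : (0:ℚ) ≤ (j:ℚ) := by nlinarith
        exact_mod_cast this
      have hjM : (j:ℚ) ≤ (p:ℚ) + q - 1 := by
        have : j ≤ (p:ℤ) + q - 1 := by omega
        calc (j:ℚ) ≤ (((p:ℤ) + q - 1 : ℤ) : ℚ) := by exact_mod_cast this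
        _ = (p:ℚ) + q - 1 := by push_cast; ring
      rw [natAbsCast p hj0, myfloor (z := (p:ℤ)-1) hM ?_ ?_]
      · push_cast; ring
      · push_cast; nlinarith [mul_nonneg (le_of_lt hM) (by linarith : (0:ℚ) ≤ (p:ℚ) + 2*q - 3*p)]
      · push_cast; nlinarith
    · rfl
  rw [hA, hB]
  norm_num

private lemma ub2pos (p q : ℕ) (hq : q ≠ 1) (hpq : 2 ≤ p + q) (h : ¬ q < p) (hppos : 0 < p) :
    ∀ ξ ∈ ((S p q).support : Set ℚ), ξ ≤ 1 - 3 / ((p : ℚ) + 2*q) := by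
  have hq2 : 2 ≤ q := by omega
  have hM : (0:ℚ) < (p:ℚ) + q := by
    have : (0:ℤ) < (p:ℤ) + q := by omega
    exact_mod_cast this
  have hN : (0:ℚ) < (p:ℚ) + 2*q := by
    have : (0:ℤ) < (p:ℤ) + 2*q := by omega
    exact_mod_cast this
  have hpq' : (p:ℚ) ≤ (q:ℚ) := by exact_mod_cast (by omega : p ≤ q)
  have hq2' : (2:ℚ) ≤ (q:ℚ) := by exact_mod_cast hq2
  have hp1 : (1:ℚ) ≤ (p:ℚ) := by exact_mod_cast hppos
  intro ξ hξ
  simp only [Finset.mem_coe, Finsupp.mem_support_iff, S_apply] at hξ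
  by_contra hgt
  push_neg at hgt
  apply hξ
  rw [Finset.sum_eq_zero ?_, Finset.sum_eq_zero ?_, add_zero]
  · -- B terms
    intro j hj
    split_ifs with hc
    · simp only [Finset.mem_Ioo] at hj
      have hjq : ((p:ℚ) + 2*q - 3) * ((p:ℚ) + q) < (j:ℚ) * ((p:ℚ) + 2*q) := by
        have h2 : ((p:ℚ) + 2*q - 3) / ((p:ℚ) + 2*q) < (j:ℚ) / ((p:ℚ)+q) := by
          rw [hc]
          calc ((p:ℚ) + 2*q - 3) / ((p:ℚ) + 2*q) = 1 - 3/((p:ℚ)+2*q) := by field_simp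
          _ < ξ := hgt
        rw [div_lt_div_iff₀ hN hM] at h2
        linarith
      -- show j = p + q - 1
      have hj1 : j = (p:ℤ) + q - 1 := by
        by_contra hne
        have hj2 : j ≤ (p:ℤ) + q - 2 := by omega
        have hj2' : (j:ℚ) ≤ (p:ℚ) + q - 2 := by
          calc (j:ℚ) ≤ (((p:ℤ) + q - 2 : ℤ):ℚ) := by exact_mod_cast hj2
          _ = (p:ℚ) + q - 2 := by push_cast; ring
        nlinarith
      subst hj1
      rw [natAbsCast p (by omega), myfloor (z := (p:ℤ)-1) hM ?_ ?_]
      · push_cast; ring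
      · push_cast; nlinarith
      · push_cast; nlinarith
    · rfl
  · -- A terms
    intro k hk
    split_ifs with hc
    · simp only [Finset.mem_Ioo] at hk
      have hkN : ((p:ℚ) + 2*q - 3) * ((p:ℚ) + 2*q) < (k:ℚ) * ((p:ℚ) + 2*q) := by
        have h2 : ((p:ℚ) + 2*q - 3) / ((p:ℚ) + 2*q) < (k:ℚ) / ((p:ℚ)+2*q) := by
          rw [hc]
          calc ((p:ℚ) + 2*q - 3) / ((p:ℚ) + 2*q) = 1 - 3/((p:ℚ)+2*q) := by field_simp
          _ < ξ := hgt
        rw [div_lt_div_iff₀ hN hN] at h2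
        linarith
      have hk3 : (p:ℤ) + 2*q - 3 < k := by
        have : ((p:ℚ) + 2*q - 3) < (k:ℚ) := by nlinarith
        exact_mod_cast this
      have hk0 : (0:ℤ) ≤ k := by omega
      have hk2' : ((p:ℚ) + 2*q - 2) ≤ (k:ℚ) := by
        calc ((p:ℚ) + 2*q - 2) = (((p:ℤ) + 2*q - 2 : ℤ):ℚ) := by push_cast; ring
        _ ≤ (k:ℚ) := by exact_mod_cast (by omega : (p:ℤ) + 2*q - 2 ≤ k)
      have hkN1 : (k:ℚ) ≤ (p:ℚ) + 2*q - 1 := by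
        calc (k:ℚ) ≤ (((p:ℤ) + 2*q - 1 : ℤ) : ℚ) := by exact_mod_cast (by omega : k ≤ (p:ℤ)+2*q-1)
        _ = (p:ℚ) + 2*q - 1 := by push_cast; ring
      rw [natAbsCast q hk0, myceil (z := (q:ℤ)) hN ?_ ?_, sub_self]
      · push_cast; nlinarith
      · push_cast; nlinarith
    · rfl

private lemma ub2zero (p q : ℕ) (hq : q ≠ 1) (hpq : 2 ≤ p + q) (h : ¬ q < p) (hp0 : p = 0) :
    ∀ ξ ∈ ((S p q).support : Set ℚ), ξ ≤ 1 - 3 / ((p : ℚ) + 2*q) := by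
  subst hp0
  have hq2 : 2 ≤ q := by omega
  have hM : (0:ℚ) < ((0:ℕ):ℚ) + q := by
    have : (0:ℤ) < ((0:ℕ):ℤ) + q := by omega
    exact_mod_cast this
  have hN : (0:ℚ) < ((0:ℕ):ℚ) + 2*q := by
    have : (0:ℤ) < ((0:ℕ):ℤ) + 2*q := by omega
    exact_mod_cast this
  have hq2' : (2:ℚ) ≤ (q:ℚ) := by exact_mod_cast hq2
  intro ξ hξ
  simp only [Finset.mem_coe, Finsupp.mem_support_iff, S_apply] at hξ
  by_contra hgt
  push_neg at hgt
  -- ξ is of the form k / (2q) for some k in Ioo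
  have key : ∃ k ∈ Finset.Ioo (-((0:ℕ) + 2 * q : ℤ)) ((0:ℕ) + 2 * q : ℤ),
      ((k:ℚ)) / (((0:ℕ):ℚ) + 2 * q) = ξ := by
    by_contra hno
    push_neg at hno
    apply hξ
    rw [Finset.sum_eq_zero ?_, Finset.sum_eq_zero ?_, add_zero]
    · -- B terms
      intro j hj
      split_ifs with hc
      · exfalso
        simp only [Finset.mem_Ioo] at hj
        refine hno (2*j) (by simp only [Finset.mem_Ioo]; omega) ?_
        rw [← hc, div_eq_div_iff hN.ne' hM.ne']
        push_cast
        ring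
      · rfl
    · -- A terms
      intro k hk
      split_ifs with hc
      · exact absurd hc (hno k hk)
      · rfl
  obtain ⟨k, hkmem, hck⟩ := key
  simp only [Finset.mem_Ioo] at hkmem
  have hk3 : 2*(q:ℤ) - 3 < k := by
    rw [← hck] at hgt
    have h2 := (lt_div_iff₀ hN).mp hgt
    have e : (1 - 3/(((0:ℕ):ℚ)+2*q)) * (((0:ℕ):ℚ)+2*q) = ((0:ℕ):ℚ) + 2*q - 3 := by
      field_simp
    rw [e] at h2
    have h3 : (2*(q:ℚ) - 3) < (k:ℚ) := by push_cast at h2 ⊢; linarith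
    exact_mod_cast h3
  have hck' : ((k:ℚ)) / (((0:ℕ):ℚ) + 2 * q) = ξ := hck
  have hkc : k = 2*(q:ℤ) - 1 ∨ k = 2*(q:ℤ) - 2 := by omega
  apply hξ
  rcases hkc with hk1 | hk1 <;> subst hk1
  · -- ξ = (2q-1)/(2q); all terms vanish
    rw [Finset.sum_eq_zero ?_, Finset.sum_eq_zero ?_, add_zero]
    · -- B terms
      intro j hj
      split_ifs with hc
      · exfalso
        rw [← hck', div_eq_div_iff hM.ne' hN.ne'] at hc
        have hcz : j * (((0:ℕ):ℤ) + 2*q) = (2*(q:ℤ)-1) * (((0:ℕ):ℤ) + q) := by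
          exact_mod_cast hc
        push_cast at hcz
        have h2 : (2*j) * (q:ℤ) = (2*(q:ℤ)-1) * q := by ring_nf at hcz ⊢; linarith
        have := mul_right_cancel₀ (show (q:ℤ) ≠ 0 by omega) h2
        omega
      · rfl
    · -- A terms
      intro k' hk'
      split_ifs with hc
      · have hkk : k' = 2*(q:ℤ) - 1 := intDivInj hN.ne' (hc.trans hck'.symm)
        subst hkk
        rw [natAbsCast q (by omega), myceil (z := (q:ℤ)) hN ?_ ?_, sub_self]
        · push_cast; nlinarith
        · push_cast; nlinarith
      · rfl
  · -- ξ = (2q-2)/(2q) = (q-1)/q; A gives 1, B gives -1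
    have hcond2 : ((((0:ℕ):ℤ) + q - 1 : ℤ) : ℚ) / (((0:ℕ):ℚ) + q) = ξ := by
      rw [← hck', div_eq_div_iff hM.ne' hN.ne']
      push_cast
      ring
    rw [Finset.sum_eq_single_of_mem ((2:ℤ)*q - 2)
        (by simp only [Finset.mem_Ioo]; omega) ?_,
      Finset.sum_eq_single_of_mem (((0:ℕ):ℤ) + q - 1)
        (by simp only [Finset.mem_Ioo]; omega) ?_]
    · rw [if_pos hck', if_pos hcond2]
      rw [natAbsCast q (by omega), natAbsCast 0 (by omega),
        myceil (z := (q:ℤ)-1) hN ?_ ?_]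
      · push_cast
        norm_num
      · push_cast; nlinarith
      · push_cast; nlinarith
    · intro j hj hne
      rw [if_neg]
      intro hcj
      exact hne (intDivInj hM.ne' (hcj.trans hcond2.symm))
    · intro k' hk' hne
      rw [if_neg]
      intro hck''
      exact hne (intDivInj hN.ne' (hck''.trans hck'.symm))


/-- Example 3.2: for `p, q ≥ 0` with `q ≠ 1` and `p + q ≥ 2`, the maximal
element of the support of `S_{p,q}` equals `1 − 2/(p+q)` if `p > q`, and `1 − 3/(p+2q)`
if `p ≤ q`. -/
theorem stmt_4 (p q : ℕ) (hq : q ≠ 1) (hpq : 2 ≤ p + q) :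
    IsGreatest (↑(S p q).support : Set ℚ)
      (if q < p then 1 - 2 / ((p : ℚ) + q) else 1 - 3 / ((p : ℚ) + 2 * q)) := by
  split_ifs with h
  · exact ⟨mem1 p q hq hpq h, fun ξ hξ => ub1 p q hq hpq h ξ hξ⟩
  · refine ⟨mem2 p q hq hpq h, fun ξ hξ => ?_⟩
    rcases Nat.eq_zero_or_pos p with hp0 | hppos
    · exact ub2zero p q hq hpq h hp0 ξ hξ
    · exact ub2pos p q hq hpq h hppos ξ hξ
end

section
/- For every integer m ≥ 1 and every real number α with 0 ≤ α < 1, the strict inequality (m−1)² + 2m/(1−α) > (2/(1−α)²) · C(m − ⌈α·m⌉, 2) holds, where C(n,2) = n(n−1)/2 denotes the binomial coefficient. -/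
lemma two_choose_two (n : ℕ) : 2 * n.choose 2 + n = n ^ 2 := by
  induction n with
  | zero => rfl
  | succ k ih =>
    have : (k + 1).choose 2 = k.choose 1 + k.choose 2 := rfl
    rw [this, Nat.choose_one_right]
    ring_nf
    ring_nf at ih
    omega

/-- the case of the ordinary `m`-fold point in the generalized Durfee bound:
`(m−1)² + 2m/(1−α) > (2/(1−α)²)·C(m − ⌈α·m⌉, 2)` for every `m ≥ 1` and `0 ≤ α < 1`. -/
theorem stmt_11 (m : ℕ) (hm : 1 ≤ m) (α : ℝ) (h0 : 0 ≤ α) (h1 : α < 1) :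
    ((m : ℝ) - 1) ^ 2 + 2 * m / (1 - α)
      > (2 / (1 - α) ^ 2) * (((m : ℤ) - ⌈α * (m : ℝ)⌉).toNat.choose 2 : ℝ) := by
  have hβ : 0 < 1 - α := by linarith
  set K : ℕ := ((m : ℤ) - ⌈α * (m : ℝ)⌉).toNat with hK
  have hm1 : (1 : ℝ) ≤ (m : ℝ) := by exact_mod_cast hm
  -- 2 * C(K,2) = K^2 - K
  have h2C : 2 * (K.choose 2 : ℝ) + K = (K : ℝ) ^ 2 := by
    exact_mod_cast congrArg (Nat.cast : ℕ → ℝ) (two_choose_two K)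
  have hk0 : (0 : ℝ) ≤ (K : ℝ) := Nat.cast_nonneg _
  -- K ≤ (1-α) m
  have hceil : α * (m : ℝ) ≤ (⌈α * (m : ℝ)⌉ : ℝ) := Int.le_ceil _
  have hkle : (K : ℝ) ≤ (1 - α) * m := by
    rcases le_or_gt ((m : ℤ) - ⌈α * (m : ℝ)⌉) 0 with h | h
    · have : K = 0 := by simp [hK, Int.toNat_of_nonpos h]
      rw [this]
      have : 0 ≤ (1 - α) * m := by positivity
      simpa using this
    · have : (K : ℤ) = (m : ℤ) - ⌈α * (m : ℝ)⌉ := Int.toNat_of_nonneg h.le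
      have : (K : ℝ) = (m : ℝ) - (⌈α * (m : ℝ)⌉ : ℝ) := by exact_mod_cast this
      rw [this]; nlinarith
  have key : 2 * (K.choose 2 : ℝ) < (((m : ℝ) - 1) ^ 2 + 2 * m / (1 - α)) * (1 - α) ^ 2 := by
    have heq : (((m : ℝ) - 1) ^ 2 + 2 * m / (1 - α)) * (1 - α) ^ 2
        = ((m : ℝ) - 1) ^ 2 * (1 - α) ^ 2 + 2 * m * (1 - α) := by
      field_simp
    rw [heq]
    nlinarith [sq_nonneg ((K : ℝ)), mul_nonneg hk0 hk0, sq_nonneg (1 - α),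
      mul_le_mul hkle hkle hk0 (by positivity : (0:ℝ) ≤ (1 - α) * m)]
  rw [gt_iff_lt, div_mul_eq_mul_div, div_lt_iff₀ (by positivity : (0:ℝ) < (1 - α) ^ 2)]
  linarith
end
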